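/- Let G be a finite group, k an algebraically closed field of characteristic p, and let ρ : G → GL_n(k) and θ : G → GL_m(k) be representations with θ irreducible. If for every g ∈ G the characteristic polynomial of ρ(g) annihilates the matrix θ(g), then the kernel of ρ is contained in the kernel of θ. -/

import Mathlib

set_option synthInstance.maxHeartbeats 1000000
set_option maxHeartbeats 1000000

open Matrix Polynomial

open Matrix

/-- A finite p-subgroup of GL_m(k), char k = p, m > 0, has a common nonzero fixed vector. -/
lemma aux_fixed_vector (p : ℕ) [Fact p.Prime] (k : Type*) [Field k] [CharP k p]
    (m : ℕ) [NeZero m] (Q : Subgroup (Matrix.GeneralLinearGroup (Fin m) k))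
    [Finite Q] (hQ : IsPGroup p Q) :
    ∃ x : Fin m → k, x ≠ 0 ∧ ∀ q : Q, ((q : Matrix.GeneralLinearGroup (Fin m) k) : Matrix (Fin m) (Fin m) k) *ᵥ x = x := by
  letI : Algebra (ZMod p) k := ZMod.algebra k p
  set mat : Q → Matrix (Fin m) (Fin m) k := fun q => ((q : Matrix.GeneralLinearGroup (Fin m) k) : Matrix (Fin m) (Fin m) k) with hmat
  have hmatmul : ∀ q q' : Q, mat q * mat q' = mat (q * q') := by
    intro q q'; simp [hmat]
  have i0 : Fin m := ⟨0, Nat.pos_of_ne_zero (NeZero.ne m)⟩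
  set v : Fin m → k := fun _ => 1 with hv
  have hvne : v ≠ 0 := by
    intro h
    have := congrFun h i0
    simp [hv] at this
  set O : Set (Fin m → k) := Set.range (fun q : Q => mat q *ᵥ v) with hO
  have hOfin : O.Finite := Set.finite_range _
  set A : Submodule (ZMod p) (Fin m → k) := Submodule.span (ZMod p) O with hA
  haveI : Module.Finite (ZMod p) A := Module.Finite.span_of_finite _ hOfin
  haveI : Finite A := Module.finite_of_finite (ZMod p)
  -- stability
  have hstab : ∀ (q : Q), ∀ x ∈ A, mat q *ᵥ x ∈ A := by
    intro q x hx
    set L : (Fin m → k) →ₗ[ZMod p] (Fin m → k) :=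
      ((Matrix.mulVecLin (mat q)).restrictScalars (ZMod p)) with hL
    have : Submodule.map L A ≤ A := by
      rw [hA, Submodule.map_span, Submodule.span_le]
      rintro y ⟨x', ⟨q', rfl⟩, rfl⟩
      apply Submodule.subset_span
      exact ⟨q * q', by simp [hL, Matrix.mulVec_mulVec, hmatmul]⟩
    exact this ⟨x, hx, rfl⟩
  letI : MulAction Q A :=
    { smul := fun q x => ⟨mat q *ᵥ (x : Fin m → k), hstab q _ x.2⟩
      one_smul := fun x => by
        apply Subtype.ext
        show mat 1 *ᵥ (x : Fin m → k) = x
        simp [hmat]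
      mul_smul := fun q q' x => by
        apply Subtype.ext
        show mat (q * q') *ᵥ (x : Fin m → k) = mat q *ᵥ (mat q' *ᵥ (x : Fin m → k))
        rw [Matrix.mulVec_mulVec, hmatmul] }
  have hsmul : ∀ (q : Q) (x : A), ((q • x : A) : Fin m → k) = mat q *ᵥ (x : Fin m → k) := fun _ _ => rfl
  -- 0 is a fixed point
  have h0 : (0 : A) ∈ MulAction.fixedPoints Q A := by
    intro q
    apply Subtype.ext
    rw [hsmul]
    simp
  -- p divides card A
  have hvA : v ∈ A := Submodule.subset_span ⟨1, by simp [hmat]⟩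
  haveI : Nontrivial A := ⟨⟨⟨v, hvA⟩, 0, by simp [Subtype.ext_iff, hvne]⟩⟩
  have hcard : p ∣ Nat.card A := by
    haveI : Fintype A := Fintype.ofFinite A
    rw [Nat.card_eq_fintype_card]
    rw [Module.card_eq_pow_finrank (K := ZMod p) (V := A), ZMod.card]
    exact dvd_pow_self p (Nat.pos_of_ne_zero (fun h => by
      have := Module.finrank_pos (R := ZMod p) (M := A); omega)).ne'
  obtain ⟨b, hbfix, hbne⟩ := hQ.exists_fixed_point_of_prime_dvd_card_of_fixed_point A hcard h0
  refine ⟨(b : Fin m → k), ?_, ?_⟩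
  · intro h
    exact hbne (Subtype.ext (by simpa using h.symm))
  · intro q
    have := hbfix q
    have := congrArg (Subtype.val) this
    rw [hsmul] at this
    exact this

/-- If `θ` is irreducible and for every `g ∈ G` the characteristic polynomial of
`ρ g` annihilates the matrix `θ g`, then `ker ρ ≤ ker θ`. -/
theorem stmt0 (p : ℕ) [Fact p.Prime] (k : Type*) [Field k] [IsAlgClosed k] [CharP k p]
    (G : Type*) [Group G] [Finite G] (n m : ℕ)
    (ρ : G →* Matrix.GeneralLinearGroup (Fin n) k)
    (θ : G →* Matrix.GeneralLinearGroup (Fin m) k)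
    (hθirr : ∀ W : Submodule k (Fin m → k),
      (∀ (g : G), ∀ x ∈ W, ((θ g : Matrix (Fin m) (Fin m) k)).mulVec x ∈ W) →
      W = ⊥ ∨ W = ⊤)
    (hann : ∀ g : G,
      (Polynomial.aeval ((θ g : Matrix (Fin m) (Fin m) k)))
        (Matrix.charpoly (ρ g : Matrix (Fin n) (Fin n) k)) = 0) :
    ρ.ker ≤ θ.ker := by
  have hp1 : 1 < p := (Fact.out : p.Prime).one_lt
  rcases Nat.eq_zero_or_pos m with hm | hm
  · subst hm
    intro g _
    show θ g = 1
    exact Units.ext (Subsingleton.elim _ _)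
  haveI : NeZero m := ⟨hm.ne'⟩
  -- every θ h for h ∈ ker ρ is unipotent, hence of p-power order
  have hunip : ∀ h ∈ ρ.ker,
      ((θ h : Matrix (Fin m) (Fin m) k) - 1) ^ n = 0 := by
    intro h hh
    have hρ : (ρ h : Matrix (Fin n) (Fin n) k) = 1 := by
      have e : ρ h = 1 := MonoidHom.mem_ker.mp hh
      rw [e]; rfl
    have hcp : (ρ h : Matrix (Fin n) (Fin n) k).charpoly = (X - 1) ^ n := by
      rw [hρ, Matrix.charpoly, charmatrix]
      rw [_root_.map_one, scalar_apply, ← diagonal_one, diagonal_sub, det_diagonal]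
      simp
    have := hann h
    rw [hcp, map_pow, map_sub, aeval_X, _root_.map_one] at this
    exact this
  have hpow : ∀ h ∈ ρ.ker,
      ((θ h : Matrix (Fin m) (Fin m) k)) ^ (p ^ n) = 1 := by
    intro h hh
    have hle : n ≤ p ^ n := le_of_lt (Nat.lt_pow_self hp1 : n < p ^ n)
    have h0 : ((θ h : Matrix (Fin m) (Fin m) k) - 1) ^ (p ^ n) = 0 := by
      rw [← Nat.sub_add_cancel hle, pow_add, hunip h hh, mul_zero]
    rw [sub_pow_char_pow_of_commute p n (Commute.one_right _)] at h0
    rw [one_pow] at h0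
    rwa [sub_eq_zero] at h0
  -- the image of ker ρ under θ is a p-group
  set Q : Subgroup (Matrix.GeneralLinearGroup (Fin m) k) := ρ.ker.map θ with hQdef
  haveI : Finite Q := by
    apply Set.Finite.to_subtype
    show ((ρ.ker.map θ : Subgroup _) : Set (Matrix.GeneralLinearGroup (Fin m) k)).Finite
    rw [Subgroup.coe_map]
    exact (Set.toFinite _).image _
  have hQ : IsPGroup p Q := by
    intro q
    obtain ⟨g, hg, hq⟩ := Subgroup.mem_map.mp q.2
    refine ⟨n, ?_⟩
    apply Subtype.ext
    apply Units.ext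
    show (((q : Matrix.GeneralLinearGroup (Fin m) k) ^ (p ^ n) :
      Matrix.GeneralLinearGroup (Fin m) k) : Matrix (Fin m) (Fin m) k) = 1
    rw [Units.val_pow_eq_pow_val, ← hq]
    exact hpow g hg
  obtain ⟨x, hxne, hxfix⟩ := aux_fixed_vector p k m Q hQ
  -- the fixed space
  set W : Submodule k (Fin m → k) :=
    { carrier := {y | ∀ h ∈ ρ.ker, (θ h : Matrix (Fin m) (Fin m) k) *ᵥ y = y}
      zero_mem' := by intro h hh; simp
      add_mem' := by
        intro a b ha hb h hh
        rw [Matrix.mulVec_add, ha h hh, hb h hh]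
      smul_mem' := by
        intro c a ha h hh
        rw [Matrix.mulVec_smul, ha h hh] } with hWdef
  have hWinv : ∀ (g : G), ∀ y ∈ W, ((θ g : Matrix (Fin m) (Fin m) k)).mulVec y ∈ W := by
    intro g y hy h hh
    have hconj : g⁻¹ * h * g ∈ ρ.ker := by
      have := (MonoidHom.normal_ker ρ).conj_mem h hh g⁻¹
      simpa using this
    have key : (θ h : Matrix (Fin m) (Fin m) k) * (θ g : Matrix (Fin m) (Fin m) k)
        = (θ g : Matrix (Fin m) (Fin m) k) * (θ (g⁻¹ * h * g) : Matrix (Fin m) (Fin m) k) := by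
      have : h * g = g * (g⁻¹ * h * g) := by group
      calc (θ h : Matrix (Fin m) (Fin m) k) * (θ g : Matrix (Fin m) (Fin m) k)
          = ((θ (h * g) : Matrix (Fin m) (Fin m) k)) := by rw [_root_.map_mul, Units.val_mul]
        _ = ((θ (g * (g⁻¹ * h * g)) : Matrix (Fin m) (Fin m) k)) := by rw [← this]
        _ = _ := by rw [_root_.map_mul, Units.val_mul]
    rw [Matrix.mulVec_mulVec, key, ← Matrix.mulVec_mulVec, hy _ hconj]
  have hxW : x ∈ W := by
    intro h hh
    exact hxfix ⟨θ h, Subgroup.mem_map.mpr ⟨h, hh, rfl⟩⟩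
  have hWtop : W = ⊤ := by
    rcases hθirr W hWinv with hbot | htop
    · exact absurd (hbot ▸ hxW) (by simpa using hxne)
    · exact htop
  intro h hh
  show θ h = 1
  apply Units.ext
  apply Matrix.ext
  intro i j
  have hfix : (θ h : Matrix (Fin m) (Fin m) k) *ᵥ Pi.single j 1 = Pi.single j 1 := by
    have : (Pi.single j 1 : Fin m → k) ∈ W := hWtop ▸ Submodule.mem_top
    exact this h hh
  have h1 := congrFun hfix i
  rw [Matrix.mulVec_single_one] at h1
  simp only [Matrix.col_apply] at h1
  rw [h1]
  simp [Matrix.one_apply, Pi.single_apply, eq_comm]
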